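/- For k = 0, 1, 2 let θ_k = 2kπ/3 and u_k = (sin θ_k, −cos θ_k), and define d_ext(x,y) = (1/4)·Σ_{k=0}^{2} |max(0, ⟨x, u_k⟩) − max(0, ⟨y, u_k⟩)| for x, y ∈ ℝ². Then: (a) d_ext(x,y) = (1/4)·μ_ext(Γ_{[x,y]}), where μ_ext = ν₀ + ν₁ + ν₂ with ν_k = (1/2)(f_k)_*(ℒ) + (1/2)(g_k)_*(ℒ), ℒ Lebesgue measure on [0,∞), f_k(t) = (θ_k, t), g_k(t) = (θ_k + π, −t); (b) d_ext is a pseudometric on ℝ² (symmetric, vanishing on the diagonal, satisfying the triangle inequality); and (c) d_ext is projective: d_ext(x,z) = d_ext(x,y) + d_ext(y,z) whenever y lies on the straight segment [x,z]. -/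
import Mathlib


noncomputable section

open MeasureTheory Real

instance : MeasurableSpace Real.Angle :=
  inferInstanceAs (MeasurableSpace (AddCircle (2 * π)))

/-- The space `Γ = (ℝ/2πℤ) × ℝ` parameterizing the lines of the Euclidean plane. -/
abbrev LineSpace : Type := Real.Angle × ℝ

/-- The line `ℓ(θ, p) = {z : z₁ sin θ − z₂ cos θ = p}` corresponding to `(θ, p) ∈ Γ`. -/
def lineOf (γ : LineSpace) : Set (ℝ × ℝ) :=
  {z : ℝ × ℝ | z.1 * γ.1.sin - z.2 * γ.1.cos = γ.2}

/-- `Γ_A`: the set of (parameters of) lines meeting a given subset `A` of the plane. -/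
def linesMeeting (A : Set (ℝ × ℝ)) : Set LineSpace :=
  {γ : LineSpace | (lineOf γ ∩ A).Nonempty}

/-- A Borel measure `μ` on the space of lines is *admissible* if it is invariant under
the involution `(θ, p) ↦ (θ + π, −p)` reversing orientations, is finite on compact sets,
and gives measure zero to the set of lines through any given point of the plane. -/
def Admissible (μ : Measure LineSpace) : Prop :=
  μ.map (fun γ : LineSpace => (γ.1 + ((π : ℝ) : Real.Angle), -γ.2)) = μ ∧
    (∀ K : Set LineSpace, IsCompact K → μ K < ⊤) ∧
    (∀ z : ℝ × ℝ, μ (linesMeeting {z}) = 0)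

/-- The pseudo-distance `d_μ(x, y) = (1/4)·μ(Γ_{[x,y]})` induced by a measure `μ` on the
space of lines. -/
def lineDist (μ : Measure LineSpace) (x y : ℝ × ℝ) : ℝ :=
  (μ (linesMeeting (segment ℝ x y))).toReal / 4

/-- The area `area_μ(A) = (1/(8π))·(μ ⊗ μ)({pairs of distinct lines meeting inside A})`
induced by a measure `μ` on the space of lines (the Santaló+Blaschke area). -/
def lineArea (μ : Measure LineSpace) (A : Set (ℝ × ℝ)) : ℝ :=
  ((μ.prod μ) {γ : LineSpace × LineSpace |
      lineOf γ.1 ≠ lineOf γ.2 ∧ (lineOf γ.1 ∩ lineOf γ.2 ∩ A).Nonempty}).toReal / (8 * π)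

/-- Weak convergence of a sequence of measures: convergence of the integrals of all
bounded continuous functions. -/
def WeakTendsto (μs : ℕ → Measure LineSpace) (μ : Measure LineSpace) : Prop :=
  ∀ f : BoundedContinuousFunction LineSpace ℝ,
    Filter.Tendsto (fun n => ∫ γ, f γ ∂(μs n)) Filter.atTop (nhds (∫ γ, f γ ∂μ))

open scoped ENNReal

/-- The unit vector `u_k = (sin θ_k, −cos θ_k)` with `θ_k = 2kπ/3`. -/
def uExt (k : ℕ) : ℝ × ℝ :=
  (Real.sin (2 * k * π / 3), -Real.cos (2 * k * π / 3))

/-- The standard inner product of `ℝ²`. -/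
def dot2 (x u : ℝ × ℝ) : ℝ := x.1 * u.1 + x.2 * u.2

/-- `f_k(t) = (θ_k, t)` where `θ_k = 2kπ/3`. -/
def fExt (k : ℕ) : ℝ → LineSpace := fun t => (((2 * k * π / 3 : ℝ) : Real.Angle), t)

/-- `g_k(t) = (θ_k + π, −t)` where `θ_k = 2kπ/3`. -/
def gExt (k : ℕ) : ℝ → LineSpace := fun t => (((2 * k * π / 3 + π : ℝ) : Real.Angle), -t)

/-- The measure `ν_k = (1/2)(f_k)_*(ℒ) + (1/2)(g_k)_*(ℒ)`, where `ℒ` is the Lebesgue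
measure on `[0, ∞)`. -/
def nuExt (k : ℕ) : Measure LineSpace :=
  (1 / 2 : ℝ≥0∞) • (volume.restrict (Set.Ici (0 : ℝ))).map (fExt k) +
    (1 / 2 : ℝ≥0∞) • (volume.restrict (Set.Ici (0 : ℝ))).map (gExt k)

/-- The extremal measure `μ_ext = ν₀ + ν₁ + ν₂`, concentrated on three pencils of
parallel lines. -/
def muExt : Measure LineSpace := nuExt 0 + nuExt 1 + nuExt 2

/-- The ball `H_r = {x ∈ ℝ² : ∑ₖ max(0, ⟨x, u_k⟩) ≤ 4r}` of radius `r` centered at the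
origin for the pseudo-metric induced by `μ_ext`. -/
def hexBall (r : ℝ) : Set (ℝ × ℝ) :=
  {x : ℝ × ℝ | ∑ k ∈ Finset.range 3, max 0 (dot2 x (uExt k)) ≤ 4 * r}

/-- The extremal distance
`d_ext(x, y) = (1/4)·∑ₖ |max(0, ⟨x, u_k⟩) − max(0, ⟨y, u_k⟩)|`. -/
def dExt (x y : ℝ × ℝ) : ℝ :=
  (1 / 4) * ∑ k ∈ Finset.range 3, |max 0 (dot2 x (uExt k)) - max 0 (dot2 y (uExt k))|

instance : MeasurableSingletonClass Real.Angle :=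
  inferInstanceAs (MeasurableSingletonClass (AddCircle (2 * π)))

lemma dot2_segment (x y : ℝ × ℝ) (u : ℝ × ℝ) (t : ℝ) :
    (∃ z ∈ segment ℝ x y, dot2 z u = t) ↔ t ∈ segment ℝ (dot2 x u) (dot2 y u) := by
  constructor
  · rintro ⟨z, ⟨a, b, ha, hb, hab, rfl⟩, rfl⟩
    exact ⟨a, b, ha, hb, hab, by simp [dot2, Prod.smul_def, smul_eq_mul]; ring⟩
  · rintro ⟨a, b, ha, hb, hab, rfl⟩
    exact ⟨a • x + b • y, ⟨a, b, ha, hb, hab, rfl⟩,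
      by simp [dot2, Prod.smul_def, smul_eq_mul]; ring⟩

lemma fExt_preimage (k : ℕ) (x y : ℝ × ℝ) :
    fExt k ⁻¹' linesMeeting (segment ℝ x y)
      = segment ℝ (dot2 x (uExt k)) (dot2 y (uExt k)) := by
  ext t
  simp only [fExt, linesMeeting, lineOf, Set.mem_preimage, Set.mem_setOf_eq]
  rw [← dot2_segment]
  constructor
  · rintro ⟨z, hz1, hz2⟩
    refine ⟨z, hz2, ?_⟩
    simp only [Set.mem_setOf_eq, Real.Angle.sin_coe, Real.Angle.cos_coe] at hz1
    simp only [dot2, uExt]; linarith [hz1]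
  · rintro ⟨z, hz, hz2⟩
    refine ⟨z, ?_, hz⟩
    simp only [Set.mem_setOf_eq, Real.Angle.sin_coe, Real.Angle.cos_coe]
    simp only [dot2, uExt] at hz2; linarith [hz2]

lemma gExt_preimage (k : ℕ) (x y : ℝ × ℝ) :
    gExt k ⁻¹' linesMeeting (segment ℝ x y)
      = segment ℝ (dot2 x (uExt k)) (dot2 y (uExt k)) := by
  ext t
  simp only [gExt, linesMeeting, lineOf, Set.mem_preimage, Set.mem_setOf_eq]
  rw [← dot2_segment]
  constructor
  · rintro ⟨z, hz1, hz2⟩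
    refine ⟨z, hz2, ?_⟩
    simp only [Set.mem_setOf_eq, Real.Angle.sin_coe, Real.Angle.cos_coe,
      Real.sin_add_pi, Real.cos_add_pi] at hz1
    simp only [dot2, uExt]; linarith [hz1]
  · rintro ⟨z, hz, hz2⟩
    refine ⟨z, ?_, hz⟩
    simp only [Set.mem_setOf_eq, Real.Angle.sin_coe, Real.Angle.cos_coe,
      Real.sin_add_pi, Real.cos_add_pi]
    simp only [dot2, uExt] at hz2; linarith [hz2]

lemma vol_segment_inter (a b : ℝ) :
    volume (segment ℝ a b ∩ Set.Ici (0 : ℝ))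
      = ENNReal.ofReal |max 0 a - max 0 b| := by
  have hint : Set.Icc (a ⊓ b) (a ⊔ b) ∩ Set.Ici (0 : ℝ) = Set.Icc (a ⊓ b ⊔ 0) (a ⊔ b) := by
    rw [← Set.Ici_inter_Iic, Set.inter_right_comm, Set.Ici_inter_Ici, Set.Ici_inter_Iic]
  rw [segment_eq_uIcc, Set.uIcc, hint, Real.volume_Icc]
  rcases le_total (a ⊔ b) 0 with hab | hab
  · have ha : a ≤ 0 := le_trans le_sup_left hab
    have hb : b ≤ 0 := le_trans le_sup_right hab
    rw [max_eq_left ha, max_eq_left hb, sub_self, abs_zero, ENNReal.ofReal_zero,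
      ENNReal.ofReal_eq_zero]
    have : a ⊓ b ⊔ 0 = 0 := sup_eq_right.2 (le_trans inf_le_left ha)
    rw [this]; simpa using hab
  · congr 1
    have e1 : a ⊔ b = (0 ⊔ a) ⊔ (0 ⊔ b) := by
      rw [← sup_sup_distrib_left, sup_eq_right.2 hab]
    have e2 : a ⊓ b ⊔ 0 = (0 ⊔ a) ⊓ (0 ⊔ b) := by
      rw [← sup_inf_left, sup_comm]
    rw [e1, e2, ← max_sub_min_eq_abs, sup_comm (0 ⊔ a) (0 ⊔ b), inf_comm (0 ⊔ a) (0 ⊔ b)]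

lemma nuExt_apply (k : ℕ) (x y : ℝ × ℝ) :
    nuExt k (linesMeeting (segment ℝ x y))
      = ENNReal.ofReal |max 0 (dot2 x (uExt k)) - max 0 (dot2 y (uExt k))| := by
  have hf : MeasurableEmbedding (fExt k) := measurableEmbedding_prodMk_left _
  have hg : MeasurableEmbedding (gExt k) := by
    have : gExt k = (Prod.mk (((2 * k * π / 3 + π : ℝ) : Real.Angle)) : ℝ → LineSpace) ∘
        (fun t : ℝ => -t) := rfl
    rw [this]
    exact (measurableEmbedding_prodMk_left _).comp (MeasurableEquiv.neg ℝ).measurableEmbedding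
  rw [nuExt, Measure.add_apply, Measure.smul_apply, Measure.smul_apply,
    hf.map_apply, hg.map_apply, Measure.restrict_apply' measurableSet_Ici,
    Measure.restrict_apply' measurableSet_Ici, fExt_preimage, gExt_preimage,
    vol_segment_inter, smul_eq_mul]
  rw [← add_mul, show (1 / 2 + 1 / 2 : ℝ≥0∞) = 1 from ENNReal.add_halves 1, one_mul]

lemma abs_sub_of_between {A B C : ℝ} (h1 : A ⊓ C ≤ B) (h2 : B ≤ A ⊔ C) :
    |A - C| = |A - B| + |B - C| := by
  rcases le_total A C with h | h
  · rw [inf_eq_left.2 h] at h1; rw [sup_eq_right.2 h] at h2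
    rw [abs_of_nonpos (by linarith), abs_of_nonpos (by linarith),
      abs_of_nonpos (by linarith)]; ring
  · rw [inf_eq_right.2 h] at h1; rw [sup_eq_left.2 h] at h2
    rw [abs_of_nonneg (by linarith), abs_of_nonneg (by linarith),
      abs_of_nonneg (by linarith)]; ring

/-- **The extremal projective pseudo-distance** (Section 11 of the paper):
(a) `d_ext(x, y) = (1/4)·μ_ext(Γ_{[x,y]})`;
(b) `d_ext` is a pseudometric on `ℝ²`;
(c) `d_ext` is projective: `d_ext(x, z) = d_ext(x, y) + d_ext(y, z)` whenever `y` lies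
on the straight segment `[x, z]`. -/
theorem dExt_properties :
    (∀ x y : ℝ × ℝ, dExt x y = (muExt (linesMeeting (segment ℝ x y))).toReal / 4) ∧
      ((∀ x : ℝ × ℝ, dExt x x = 0) ∧ (∀ x y : ℝ × ℝ, dExt x y = dExt y x) ∧
        ∀ x y z : ℝ × ℝ, dExt x z ≤ dExt x y + dExt y z) ∧
      (∀ x y z : ℝ × ℝ, y ∈ segment ℝ x z → dExt x z = dExt x y + dExt y z) := by
  have key : ∀ x y : ℝ × ℝ, (muExt (linesMeeting (segment ℝ x y))).toReal
      = ∑ k ∈ Finset.range 3, |max 0 (dot2 x (uExt k)) - max 0 (dot2 y (uExt k))| := by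
    intro x y
    rw [muExt, Measure.add_apply, Measure.add_apply, nuExt_apply, nuExt_apply, nuExt_apply,
      ENNReal.toReal_add (ENNReal.add_ne_top.2 ⟨ENNReal.ofReal_ne_top, ENNReal.ofReal_ne_top⟩)
        ENNReal.ofReal_ne_top,
      ENNReal.toReal_add ENNReal.ofReal_ne_top ENNReal.ofReal_ne_top,
      ENNReal.toReal_ofReal (abs_nonneg _), ENNReal.toReal_ofReal (abs_nonneg _),
      ENNReal.toReal_ofReal (abs_nonneg _)]
    rw [Finset.sum_range_succ, Finset.sum_range_succ, Finset.sum_range_one]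
  refine ⟨?_, ⟨?_, ?_, ?_⟩, ?_⟩
  · intro x y
    rw [key, dExt]; ring
  · intro x; simp [dExt]
  · intro x y; simp [dExt, abs_sub_comm]
  · intro x y z
    simp only [dExt, ← mul_add, ← Finset.sum_add_distrib]
    refine mul_le_mul_of_nonneg_left (Finset.sum_le_sum fun k _ => ?_) (by norm_num)
    exact abs_sub_le _ _ _
  · intro x y z hy
    have hbet : ∀ k : ℕ, max 0 (dot2 x (uExt k)) ⊓ max 0 (dot2 z (uExt k))
        ≤ max 0 (dot2 y (uExt k)) ∧
        max 0 (dot2 y (uExt k)) ≤ max 0 (dot2 x (uExt k)) ⊔ max 0 (dot2 z (uExt k)) := by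
      intro k
      have h1 : dot2 y (uExt k) ∈ segment ℝ (dot2 x (uExt k)) (dot2 z (uExt k)) :=
        (dot2_segment x z (uExt k) _).1 ⟨y, hy, rfl⟩
      rw [segment_eq_uIcc, Set.mem_uIcc] at h1
      rcases h1 with ⟨h1, h2⟩ | ⟨h1, h2⟩
      · exact ⟨le_trans inf_le_left (max_le_max le_rfl h1),
          le_trans (max_le_max le_rfl h2) le_sup_right⟩
      · exact ⟨le_trans inf_le_right (max_le_max le_rfl h1),
          le_trans (max_le_max le_rfl h2) le_sup_left⟩
    simp only [dExt, ← mul_add, ← Finset.sum_add_distrib]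
    congr 1
    refine Finset.sum_congr rfl fun k _ => ?_
    exact abs_sub_of_between (hbet k).1 (hbet k).2
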